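/- There does not exist a real number α such that L_{(−2,−1,−α)}φ₂(x,y,t) = L_{(−2,−1,−α)}φ₂(−x,−y,−t) for all (x,y,t) ∈ ℝ³; i.e., the second order Heisenberg B-spline admits no symmetry center of this form. -/

import Mathlib

open MeasureTheory

/-- Heisenberg group multiplication on ℝ³. -/
noncomputable def Hmul (a b : ℝ × ℝ × ℝ) : ℝ × ℝ × ℝ :=
  (a.1 + b.1, a.2.1 + b.2.1, a.2.2 + b.2.2 + (b.1 * a.2.1 - b.2.1 * a.1) / 2)

/-- Heisenberg group inverse. -/
noncomputable def Hinv (a : ℝ × ℝ × ℝ) : ℝ × ℝ × ℝ := (-a.1, -a.2.1, -a.2.2)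

/-- Group convolution on the Heisenberg group. -/
noncomputable def Hconv (f g : ℝ × ℝ × ℝ → ℝ) : ℝ × ℝ × ℝ → ℝ :=
  fun p => ∫ q : ℝ × ℝ × ℝ, f (Hmul p (Hinv q)) * g q

/-- The fundamental domain Q = [0,2]×[0,1]×[0,1]. -/
noncomputable def Q : Set (ℝ × ℝ × ℝ) :=
  Set.Icc (0 : ℝ) 2 ×ˢ Set.Icc (0 : ℝ) 1 ×ˢ Set.Icc (0 : ℝ) 1

/-- The B-splines on the Heisenberg group: φ₁ = (1/√2)·χ_Q, φₙ = φₙ₋₁ * φ₁. -/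
noncomputable def phi : ℕ → (ℝ × ℝ × ℝ → ℝ)
  | 0 => fun _ => 0
  | 1 => fun p => Q.indicator (fun _ => (Real.sqrt 2)⁻¹) p
  | (n + 2) => Hconv (phi (n + 1)) (phi 1)

/-- Left translation on the Heisenberg group. -/
noncomputable def Ltr (a : ℝ × ℝ × ℝ) (f : ℝ × ℝ × ℝ → ℝ) : ℝ × ℝ × ℝ → ℝ :=
  fun p => f (Hmul (Hinv a) p)

/-- auxiliary set -/
def Sset (p : ℝ × ℝ × ℝ) : Set (ℝ × ℝ × ℝ) := Q ∩ {q | Hmul p (Hinv q) ∈ Q}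

lemma measurableSet_Q : MeasurableSet Q :=
  measurableSet_Icc.prod (measurableSet_Icc.prod measurableSet_Icc)

lemma measurableSet_Sset (p : ℝ × ℝ × ℝ) : MeasurableSet (Sset p) := by
  apply measurableSet_Q.inter
  have hc : Continuous fun q : ℝ × ℝ × ℝ => Hmul p (Hinv q) := by
    unfold Hmul Hinv; fun_prop
  exact hc.measurable measurableSet_Q

lemma phi2_eq (p : ℝ × ℝ × ℝ) :
    phi 2 p = (volume (Sset p)).toReal * 2⁻¹ := by
  have h2 : phi 2 = Hconv (phi 1) (phi 1) := by simp [phi]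
  rw [h2]
  have key : (fun q => phi 1 (Hmul p (Hinv q)) * phi 1 q)
      = (Sset p).indicator (fun _ => (2 : ℝ)⁻¹) := by
    funext q
    by_cases h1 : Hmul p (Hinv q) ∈ Q <;> by_cases h2 : q ∈ Q <;>
      simp [phi, Set.indicator, h1, h2, Sset, ← Real.sqrt_inv,
        Real.mul_self_sqrt (by norm_num : (0:ℝ) ≤ 2⁻¹)]
  show (∫ q, phi 1 (Hmul p (Hinv q)) * phi 1 q) = _
  rw [key, integral_indicator_const _ (measurableSet_Sset p)]
  simp [mul_comm]; rfl

lemma vanish (σ : ℝ) (h : σ < -(1/2) ∨ 5/2 < σ) : phi 2 (1, 1, σ) = 0 := by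
  rw [phi2_eq]
  have : Sset (1, 1, σ) = ∅ := by
    ext ⟨u, v, s⟩
    simp only [Sset, Set.mem_inter_iff, Set.mem_setOf_eq, Set.mem_empty_iff_false, iff_false,
      Q, Hmul, Hinv, Set.mem_prod, Set.mem_Icc, not_and]
    rintro ⟨⟨hu0, hu2⟩, ⟨hv0, hv1⟩, ⟨hs0, hs1⟩⟩
    push_neg
    intro ⟨h1l, h1r⟩ ⟨h2l, h2r⟩
    intro h3
    rcases h with h | h <;> linarith
  simp [this]

lemma volQ_lt_top : volume Q < ⊤ :=
  ((isCompact_Icc.prod (isCompact_Icc.prod isCompact_Icc)) : IsCompact Q).measure_lt_top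

lemma pos_aux {p : ℝ × ℝ × ℝ} (a₁ b₁ a₂ b₂ a₃ b₃ : ℝ)
    (h1 : a₁ < b₁) (h2 : a₂ < b₂) (h3 : a₃ < b₃)
    (hsub : Set.Icc a₁ b₁ ×ˢ Set.Icc a₂ b₂ ×ˢ Set.Icc a₃ b₃ ⊆ Sset p) :
    0 < phi 2 p := by
  rw [phi2_eq]
  have hB : (0:ENNReal) < volume (Set.Icc a₁ b₁ ×ˢ Set.Icc a₂ b₂ ×ˢ Set.Icc a₃ b₃) := by
    rw [show (volume : Measure (ℝ × ℝ × ℝ)) = (volume.prod (volume.prod volume)) from rfl,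
      Measure.prod_prod, Measure.prod_prod, Real.volume_Icc, Real.volume_Icc, Real.volume_Icc]
    have : ∀ a b : ℝ, a < b → (0:ENNReal) < ENNReal.ofReal (b - a) := by
      intro a b hab; simpa using sub_pos.mpr hab
    exact ENNReal.mul_pos (this _ _ h1).ne'
      (ENNReal.mul_pos (this _ _ h2).ne' (this _ _ h3).ne').ne'
  have hpos : 0 < volume (Sset p) := lt_of_lt_of_le hB (measure_mono hsub)
  have hne : volume (Sset p) ≠ ⊤ :=
    ((measure_mono (Set.inter_subset_left : Sset p ⊆ Q)).trans_lt volQ_lt_top).ne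
  have := ENNReal.toReal_pos hpos.ne' hne
  positivity

lemma pos1 : 0 < phi 2 (3, 1, -(3/4)) := by
  apply pos_aux 1 (11/10) (9/10) 1 0 (1/20) (by norm_num) (by norm_num) (by norm_num)
  rintro ⟨u, v, s⟩ hq
  simp only [Set.mem_prod, Set.mem_Icc] at hq
  obtain ⟨⟨hu1, hu2⟩, ⟨hv1, hv2⟩, ⟨hs1, hs2⟩⟩ := hq
  simp only [Sset, Set.mem_inter_iff, Set.mem_setOf_eq, Q, Hmul, Hinv, Set.mem_prod, Set.mem_Icc]
  refine ⟨⟨⟨?_, ?_⟩, ⟨?_, ?_⟩, ?_, ?_⟩, ⟨?_, ?_⟩, ⟨?_, ?_⟩, ?_, ?_⟩ <;> nlinarith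

lemma pos2 : 0 < phi 2 (3, 1, 11/4) := by
  apply pos_aux (19/10) 2 0 (1/20) (19/20) 1 (by norm_num) (by norm_num) (by norm_num)
  rintro ⟨u, v, s⟩ hq
  simp only [Set.mem_prod, Set.mem_Icc] at hq
  obtain ⟨⟨hu1, hu2⟩, ⟨hv1, hv2⟩, ⟨hs1, hs2⟩⟩ := hq
  simp only [Sset, Set.mem_inter_iff, Set.mem_setOf_eq, Q, Hmul, Hinv, Set.mem_prod, Set.mem_Icc]
  refine ⟨⟨⟨?_, ?_⟩, ⟨?_, ?_⟩, ?_, ?_⟩, ⟨?_, ?_⟩, ⟨?_, ?_⟩, ?_, ?_⟩ <;> nlinarith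

theorem no_symmetry_center :
    ¬ ∃ α : ℝ, ∀ x y t : ℝ,
        Ltr (-2, -1, -α) (phi 2) (x, y, t) =
          Ltr (-2, -1, -α) (phi 2) (-x, -y, -t) := by
  rintro ⟨α, h⟩
  have e1 : phi 2 (3, 1, -(3/4)) = phi 2 (1, 1, 2*α + 3/4) := by
    have := h 1 0 (-(3/4) - α - 1/2)
    simp only [Ltr, Hinv, Hmul] at this
    norm_num at this
    convert this using 3 <;> ring_nf
  have e2 : phi 2 (3, 1, 11/4) = phi 2 (1, 1, 2*α - 11/4) := by
    have := h 1 0 (11/4 - α - 1/2)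
    simp only [Ltr, Hinv, Hmul] at this
    norm_num at this
    convert this using 3 <;> ring_nf
  have h1 : ¬ (5/2 < 2*α + 3/4) := fun hh => by
    have := vanish _ (Or.inr hh); rw [← e1] at this; exact absurd this pos1.ne'
  have h2 : ¬ (2*α - 11/4 < -(1/2)) := fun hh => by
    have := vanish _ (Or.inl hh); rw [← e2] at this; exact absurd this pos2.ne'
  push_neg at h1 h2
  linarith
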